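/- Let [A] be an interval matrix with midpoint Ac = I (the identity matrix) and radius Δ = (1/2)(Ā−A̲). Then [A] is strongly semimonotone if and only if ρ(Δ) ≤ 1. -/

import Mathlib

open Matrix Filter Topology

/-- Spectral radius of a real square matrix (via its complex spectrum). -/
noncomputable def specRad {n : ℕ} (A : Matrix (Fin n) (Fin n) ℝ) : ℝ :=
  (spectralRadius ℂ (A.map (algebraMap ℝ ℂ))).toReal

/-- `A` is an M-matrix: `A = s•I - N` with `N ≥ 0` and `s > ρ(N)`. -/
def IsMMatrix {n : ℕ} (A : Matrix (Fin n) (Fin n) ℝ) : Prop :=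
  ∃ (s : ℝ) (N : Matrix (Fin n) (Fin n) ℝ),
    (∀ i j, 0 ≤ N i j) ∧ A = s • (1 : Matrix (Fin n) (Fin n) ℝ) - N ∧ specRad N < s

/-- `A` is an M0-matrix: `A = s•I - N` with `N ≥ 0` and `s ≥ ρ(N)`. -/
def IsM0Matrix {n : ℕ} (A : Matrix (Fin n) (Fin n) ℝ) : Prop :=
  ∃ (s : ℝ) (N : Matrix (Fin n) (Fin n) ℝ),
    (∀ i j, 0 ≤ N i j) ∧ A = s • (1 : Matrix (Fin n) (Fin n) ℝ) - N ∧ specRad N ≤ s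

/-- Comparison matrix. -/
def compMatrix {n : ℕ} (A : Matrix (Fin n) (Fin n) ℝ) : Matrix (Fin n) (Fin n) ℝ :=
  fun i j => if i = j then |A i i| else -|A i j|

def IsHMatrix {n : ℕ} (A : Matrix (Fin n) (Fin n) ℝ) : Prop :=
  IsMMatrix (compMatrix A)

def IsSMatrix {n : ℕ} (A : Matrix (Fin n) (Fin n) ℝ) : Prop :=
  ∃ x : Fin n → ℝ, (∀ i, 0 < x i) ∧ (∀ i, 0 < A.mulVec x i)

def Copositive {n : ℕ} (A : Matrix (Fin n) (Fin n) ℝ) : Prop :=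
  ∀ x : Fin n → ℝ, (∀ i, 0 ≤ x i) → 0 ≤ x ⬝ᵥ A.mulVec x

def StrictlyCopositive {n : ℕ} (A : Matrix (Fin n) (Fin n) ℝ) : Prop :=
  ∀ x : Fin n → ℝ, (∀ i, 0 ≤ x i) → x ≠ 0 → 0 < x ⬝ᵥ A.mulVec x

def Semimonotone {n : ℕ} (A : Matrix (Fin n) (Fin n) ℝ) : Prop :=
  ∀ I : Finset (Fin n), I.Nonempty →
    ¬ ∃ x : ↥I → ℝ,
      (∀ i, (A.submatrix ((↑) : ↥I → Fin n) ((↑) : ↥I → Fin n)).mulVec x i < 0) ∧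
      (∀ i, 0 ≤ x i)

def PrincipallyNondegenerate {n : ℕ} (A : Matrix (Fin n) (Fin n) ℝ) : Prop :=
  ∀ I : Finset (Fin n), I.Nonempty →
    (A.submatrix ((↑) : ↥I → Fin n) ((↑) : ↥I → Fin n)).det ≠ 0

/-- A nonnegative matrix is irreducible if `(I + A)^(n-1) > 0` entrywise. -/
def IrreducibleMat {n : ℕ} (A : Matrix (Fin n) (Fin n) ℝ) : Prop :=
  ∀ i j, 0 < ((1 + A) ^ (n - 1)) i j

/-- The block matrix `[[A_II, -A_IJ], [-A_JI, A_JJ]]`. -/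
def csBlock {n : ℕ} (A : Matrix (Fin n) (Fin n) ℝ) (I J : Finset (Fin n)) :
    Matrix (↥I ⊕ ↥J) (↥I ⊕ ↥J) ℝ :=
  Matrix.fromBlocks
    (A.submatrix ((↑) : ↥I → Fin n) ((↑) : ↥I → Fin n))
    (-(A.submatrix ((↑) : ↥I → Fin n) ((↑) : ↥J → Fin n)))
    (-(A.submatrix ((↑) : ↥J → Fin n) ((↑) : ↥I → Fin n)))
    (A.submatrix ((↑) : ↥J → Fin n) ((↑) : ↥J → Fin n))

def ColumnSufficient {n : ℕ} (A : Matrix (Fin n) (Fin n) ℝ) : Prop :=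
  ∀ I J : Finset (Fin n), Disjoint I J → (I ∪ J).Nonempty →
    ¬ ∃ x : (↥I ⊕ ↥J) → ℝ,
      (∀ k, (csBlock A I J).mulVec x k ≤ 0) ∧
      (csBlock A I J).mulVec x ≠ 0 ∧
      (∀ k, 0 < x k)

def IsR0Matrix {n : ℕ} (A : Matrix (Fin n) (Fin n) ℝ) : Prop :=
  ∀ I : Finset (Fin n), I.Nonempty →
    ¬ ∃ x : ↥I → ℝ,
      (∀ i, (A.submatrix ((↑) : ↥I → Fin n) ((↑) : ↥I → Fin n)).mulVec x i = 0) ∧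
      (∀ j : ↥(Iᶜ : Finset (Fin n)),
        0 ≤ (A.submatrix ((↑) : ↥(Iᶜ : Finset (Fin n)) → Fin n) ((↑) : ↥I → Fin n)).mulVec x j) ∧
      (∀ i, 0 < x i)

def IsRMatrix {n : ℕ} (A : Matrix (Fin n) (Fin n) ℝ) : Prop :=
  ∀ I : Finset (Fin n), I.Nonempty →
    ¬ ∃ (x : ↥I → ℝ) (t : ℝ),
      (∀ i, (A.submatrix ((↑) : ↥I → Fin n) ((↑) : ↥I → Fin n)).mulVec x i + t = 0) ∧
      (∀ j : ↥(Iᶜ : Finset (Fin n)),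
        0 ≤ (A.submatrix ((↑) : ↥(Iᶜ : Finset (Fin n)) → Fin n) ((↑) : ↥I → Fin n)).mulVec x j + t) ∧
      (∀ i, 0 < x i) ∧ 0 ≤ t

def PosDefMat {n : ℕ} (A : Matrix (Fin n) (Fin n) ℝ) : Prop :=
  ∀ x : Fin n → ℝ, x ≠ 0 → 0 < x ⬝ᵥ A.mulVec x

def PosSemidefMat {n : ℕ} (A : Matrix (Fin n) (Fin n) ℝ) : Prop :=
  ∀ x : Fin n → ℝ, 0 ≤ x ⬝ᵥ A.mulVec x

/-- Membership of `A` in the interval matrix `[Al, Au]`. -/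
def memInterval {n : ℕ} (Al Au A : Matrix (Fin n) (Fin n) ℝ) : Prop :=
  ∀ i j, Al i j ≤ A i j ∧ A i j ≤ Au i j

/-- The mixed block matrix `[[Al_II, -Au_IJ], [-Au_JI, Al_JJ]]`. -/
def csMixedBlock {n : ℕ} (Al Au : Matrix (Fin n) (Fin n) ℝ) (I J : Finset (Fin n)) :
    Matrix (↥I ⊕ ↥J) (↥I ⊕ ↥J) ℝ :=
  Matrix.fromBlocks
    (Al.submatrix ((↑) : ↥I → Fin n) ((↑) : ↥I → Fin n))
    (-(Au.submatrix ((↑) : ↥I → Fin n) ((↑) : ↥J → Fin n)))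
    (-(Au.submatrix ((↑) : ↥J → Fin n) ((↑) : ↥I → Fin n)))
    (Al.submatrix ((↑) : ↥J → Fin n) ((↑) : ↥J → Fin n))

attribute [local instance] Matrix.linftyOpNormedRing Matrix.linftyOpNormedAlgebra

lemma specRad_ge {n : ℕ} (Δ : Matrix (Fin n) (Fin n) ℝ) (hΔ : ∀ i j, 0 ≤ Δ i j)
    (x : Fin n → ℝ) (hx : ∀ i, 0 ≤ x i) (i₀ : Fin n) (hx0 : 0 < x i₀)
    (c : ℝ) (hc : 0 < c) (h : ∀ i, c * x i ≤ Δ.mulVec x i) : c ≤ specRad Δ := by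
  haveI : CompleteSpace (Matrix (Fin n) (Fin n) ℂ) :=
    FiniteDimensional.complete ℂ (Matrix (Fin n) (Fin n) ℂ)
  set a : Matrix (Fin n) (Fin n) ℂ := Δ.map (algebraMap ℝ ℂ) with ha
  -- iterate bound
  have key : ∀ k : ℕ, ∀ i, c ^ k * x i ≤ ((Δ ^ k).mulVec x) i := by
    intro k
    induction k with
    | zero => intro i; simp [Matrix.mulVec_one]
    | succ k ih =>
      intro i
      have hδk : (Δ ^ (k+1)) *ᵥ x = Δ *ᵥ ((Δ ^ k) *ᵥ x) := by
        rw [Matrix.mulVec_mulVec, ← pow_succ']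
      rw [hδk]
      set u := (Δ ^ k) *ᵥ x with hu
      have h1 : c ^ k * (Δ *ᵥ x) i ≤ (Δ *ᵥ u) i := by
        simp only [Matrix.mulVec, dotProduct, Finset.mul_sum]
        apply Finset.sum_le_sum
        intro j _
        have := ih j
        calc c ^ k * (Δ i j * x j) = Δ i j * (c ^ k * x j) := by ring
          _ ≤ Δ i j * u j := mul_le_mul_of_nonneg_left this (hΔ i j)
      calc c ^ (k+1) * x i = c ^ k * (c * x i) := by ring
        _ ≤ c ^ k * (Δ *ᵥ x) i := by
            exact mul_le_mul_of_nonneg_left (h i) (pow_nonneg hc.le k)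
        _ ≤ _ := h1
  -- norm bound
  set xc : Fin n → ℂ := fun i => (x i : ℂ) with hxc
  have hxcn : 0 < ‖xc‖ := by
    have : ‖xc i₀‖ ≤ ‖xc‖ := norm_le_pi_norm xc i₀
    have h2 : ‖xc i₀‖ = x i₀ := by simp [hxc, abs_of_nonneg (hx i₀)]
    linarith
  have normb : ∀ k : ℕ, c ^ k * x i₀ ≤ ‖a ^ k‖ * ‖xc‖ := by
    intro k
    have hmap : a ^ k = (Δ ^ k).map (algebraMap ℝ ℂ) := by
      have := map_pow ((algebraMap ℝ ℂ).mapMatrix (m := Fin n)) Δ k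
      simpa [ha] using this.symm
    have hmv : (a ^ k) *ᵥ xc = fun i => (((Δ ^ k) *ᵥ x) i : ℂ) := by
      rw [hmap]; ext i; simp [hxc, Matrix.mulVec, dotProduct]
    have h1 : c ^ k * x i₀ ≤ ‖((a ^ k) *ᵥ xc) i₀‖ := by
      rw [hmv]
      simp only [Complex.norm_real]
      exact (key k i₀).trans (le_abs_self _)
    calc c ^ k * x i₀ ≤ ‖((a ^ k) *ᵥ xc) i₀‖ := h1
      _ ≤ ‖(a ^ k) *ᵥ xc‖ := norm_le_pi_norm _ i₀
      _ ≤ ‖a ^ k‖ * ‖xc‖ := Matrix.linfty_opNorm_mulVec _ _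
  -- Gelfand
  set K : ℝ := x i₀ / ‖xc‖ with hK
  have hKpos : 0 < K := div_pos hx0 hxcn
  have hnormk : ∀ k : ℕ, c ^ k * K ≤ ‖a ^ k‖ := by
    intro k
    rw [hK, ← mul_div_assoc, div_le_iff₀ hxcn]
    exact normb k
  have gel := spectrum.pow_norm_pow_one_div_tendsto_nhds_spectralRadius a
  have glim : Tendsto (fun k : ℕ => ENNReal.ofReal (c * K ^ ((1:ℝ) / k))) atTop
      (𝓝 (ENNReal.ofReal c)) := by
    have h1 : Tendsto (fun k : ℕ => K ^ ((1:ℝ) / k)) atTop (𝓝 1) := by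
      have h2 : Tendsto (fun k : ℕ => Real.log K * (1 / k)) atTop (𝓝 0) := by
        simpa using (tendsto_one_div_atTop_nhds_zero_nat).const_mul (Real.log K)
      have h3 := (Real.continuous_exp.tendsto 0).comp h2
      simp only [Real.exp_zero] at h3
      refine h3.congr fun k => ?_
      rw [Function.comp_apply, ← Real.rpow_def_of_pos hKpos]
    have h4 : Tendsto (fun k : ℕ => c * K ^ ((1:ℝ) / k)) atTop (𝓝 c) := by
      simpa using (h1.const_mul c)
    exact (ENNReal.continuous_ofReal.tendsto c).comp h4
  have hle : ENNReal.ofReal c ≤ spectralRadius ℂ a := by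
    refine le_of_tendsto_of_tendsto glim gel ?_
    filter_upwards [eventually_ge_atTop 1] with k hk
    apply ENNReal.ofReal_le_ofReal
    have hk0 : (k : ℝ) ≠ 0 := by positivity
    have : c * K ^ ((1:ℝ)/k) = (c ^ k * K) ^ ((1:ℝ)/k) := by
      rw [Real.mul_rpow (by positivity) hKpos.le, ← Real.rpow_natCast c k,
        ← Real.rpow_mul hc.le]
      rw [mul_one_div, div_self hk0, Real.rpow_one]
    rw [this]
    exact Real.rpow_le_rpow (by positivity) (hnormk k) (by positivity)
  -- conclude
  haveI : Nonempty (Fin n) := ⟨i₀⟩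
  haveI : NormOneClass (Matrix (Fin n) (Fin n) ℂ) := Matrix.linfty_opNormOneClass
  have hne : spectralRadius ℂ a ≠ ⊤ :=
    ((spectrum.spectralRadius_le_nnnorm a).trans_lt ENNReal.coe_lt_top).ne
  have := ENNReal.toReal_mono hne hle
  rwa [ENNReal.toReal_ofReal hc.le] at this

lemma exists_pf_vec {n : ℕ} (Δ : Matrix (Fin n) (Fin n) ℝ) (hΔ : ∀ i j, 0 ≤ Δ i j)
    (h : 1 < specRad Δ) :
    ∃ w : Fin n → ℝ, (∀ i, 0 ≤ w i) ∧ (∃ i, 0 < w i) ∧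
      ∀ i, 0 < w i → w i < Δ.mulVec w i := by
  set a : Matrix (Fin n) (Fin n) ℂ := Δ.map (algebraMap ℝ ℂ) with ha
  -- get an eigenvalue of modulus > 1
  have hS : (1 : ENNReal) < spectralRadius ℂ a := by
    rcases eq_or_ne (spectralRadius ℂ a) ⊤ with ht | ht
    · rw [ht]; exact ENNReal.one_lt_top
    · have := h
      rw [specRad, ← ha] at this
      rw [← ENNReal.toReal_lt_toReal (by simp) ht]
      simpa using this
  rw [spectralRadius] at hS
  rw [lt_iSup_iff] at hS
  obtain ⟨lam, hlam⟩ := hS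
  rw [lt_iSup_iff] at hlam
  obtain ⟨hmem, hnorm⟩ := hlam
  have hnorm' : 1 < ‖lam‖ := by
    have := hnorm
    rw [← ENNReal.coe_one, ENNReal.coe_lt_coe] at this
    exact_mod_cast this
  -- eigenvector
  have hdet : (lam • (1 : Matrix (Fin n) (Fin n) ℂ) - a).det = 0 := by
    by_contra hd
    apply spectrum.mem_iff.mp hmem
    rw [Algebra.algebraMap_eq_smul_one]
    exact (Matrix.isUnit_iff_isUnit_det _).mpr (isUnit_iff_ne_zero.mpr hd)
  obtain ⟨v, hv0, hveq⟩ := (Matrix.exists_mulVec_eq_zero_iff).mpr hdet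
  have heig : a *ᵥ v = lam • v := by
    have := hveq
    rw [Matrix.sub_mulVec, sub_eq_zero] at this
    have h1 : (lam • (1 : Matrix (Fin n) (Fin n) ℂ)) *ᵥ v = lam • v := by
      simp [Matrix.smul_mulVec]
    rw [← h1, this]
  set w : Fin n → ℝ := fun i => ‖v i‖ with hw
  have hkey : ∀ i, ‖lam‖ * w i ≤ Δ.mulVec w i := by
    intro i
    have h1 : (a *ᵥ v) i = lam * v i := by rw [heig]; simp
    have h2 : ‖lam‖ * w i = ‖(a *ᵥ v) i‖ := by
      rw [h1]; simp [hw]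
    rw [h2]
    calc ‖(a *ᵥ v) i‖
        = ‖∑ j, (Δ i j : ℂ) * v j‖ := by
          simp [ha, Matrix.mulVec, dotProduct, Matrix.map_apply]
      _ ≤ ∑ j, ‖(Δ i j : ℂ) * v j‖ := by
          exact norm_sum_le _ _
      _ = ∑ j, Δ i j * w j := by
          apply Finset.sum_congr rfl
          intro j _
          rw [norm_mul, hw]
          simp [abs_of_nonneg (hΔ i j)]
      _ = Δ.mulVec w i := by simp [Matrix.mulVec, dotProduct]
  refine ⟨w, fun i => norm_nonneg _, ?_, ?_⟩
  · by_contra hc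
    push_neg at hc
    apply hv0
    funext i
    have := le_antisymm (hc i) (norm_nonneg (v i))
    simpa [hw] using (norm_eq_zero.mp (by rw [← this]))
  · intro i hwi
    have := hkey i
    nlinarith [hnorm']

lemma sum_I_ite {n : ℕ} (I : Finset (Fin n)) (i : ↥I) (f : Fin n → ℝ) :
    ∑ j : ↥I, (if (↑i : Fin n) = ↑j then 1 else 0) * f ↑j = f ↑i := by
  rw [Finset.sum_coe_sort I (fun j => (if (↑i : Fin n) = j then 1 else 0) * f j)]
  rw [Finset.sum_congr rfl (fun j _ => by rw [ite_mul, one_mul, zero_mul] :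
    ∀ j ∈ I, (if (↑i : Fin n) = j then 1 else 0) * f j = if (↑i : Fin n) = j then f j else 0)]
  rw [Finset.sum_ite_eq]
  simp [i.prop]

lemma sum_I_le_mulVec {n : ℕ} (Δ : Matrix (Fin n) (Fin n) ℝ) (hΔ : ∀ i j, 0 ≤ Δ i j)
    (I : Finset (Fin n)) (i : ↥I) (xh : Fin n → ℝ) (hnn : ∀ i, 0 ≤ xh i) :
    ∑ j : ↥I, Δ ↑i ↑j * xh ↑j ≤ (Δ.mulVec xh) ↑i := by
  rw [Finset.sum_coe_sort I (fun j => Δ ↑i j * xh j)]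
  simp only [Matrix.mulVec, dotProduct]
  exact Finset.sum_le_sum_of_subset_of_nonneg (Finset.subset_univ I)
    (fun j _ _ => mul_nonneg (hΔ _ _) (hnn j))

lemma sum_I_eq_mulVec {n : ℕ} (Δ : Matrix (Fin n) (Fin n) ℝ)
    (I : Finset (Fin n)) (i : ↥I) (xh : Fin n → ℝ) (hz : ∀ j, j ∉ I → xh j = 0) :
    ∑ j : ↥I, Δ ↑i ↑j * xh ↑j = (Δ.mulVec xh) ↑i := by
  rw [Finset.sum_coe_sort I (fun j => Δ ↑i j * xh j)]
  simp only [Matrix.mulVec, dotProduct]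
  exact Finset.sum_subset (Finset.subset_univ I)
    (fun j _ hj => by rw [hz j hj, mul_zero])

theorem stmt_6 {n : ℕ} (Al Au : Matrix (Fin n) (Fin n) ℝ)
    (hle : ∀ i j, Al i j ≤ Au i j)
    (Ac : Matrix (Fin n) (Fin n) ℝ) (hAc : Ac = (1/2 : ℝ) • (Al + Au)) (Δ : Matrix (Fin n) (Fin n) ℝ) (hΔ : Δ = (1/2 : ℝ) • (Au - Al))
    (hI : Ac = (1 : Matrix (Fin n) (Fin n) ℝ)) :
    (∀ A : Matrix (Fin n) (Fin n) ℝ, memInterval Al Au A → Semimonotone A) ↔ specRad Δ ≤ 1 := by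
  have hΔnn : ∀ i j, 0 ≤ Δ i j := by
    intro i j; rw [hΔ]; simp only [Matrix.smul_apply, Matrix.sub_apply, smul_eq_mul]
    have := hle i j; linarith
  have hAl : ∀ i j, Al i j = (1 : Matrix (Fin n) (Fin n) ℝ) i j - Δ i j := by
    intro i j
    have h1 : Ac i j = (1/2 : ℝ) * (Al i j + Au i j) := by rw [hAc]; simp
    have h2 : Δ i j = (1/2 : ℝ) * (Au i j - Al i j) := by rw [hΔ]; simp
    rw [← hI, h1, h2]; ring
  constructor
  · -- strong semimonotone → specRad ≤ 1
    intro hsm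
    by_contra hgt
    push_neg at hgt
    obtain ⟨w, hwnn, ⟨i₁, hi₁⟩, hwlt⟩ := exists_pf_vec Δ hΔnn hgt
    set I : Finset (Fin n) := Finset.univ.filter (fun i => 0 < w i) with hIdef
    have hne : I.Nonempty := ⟨i₁, by simp [hIdef, hi₁]⟩
    have hmem : memInterval Al Au Al := fun i j => ⟨le_refl _, hle i j⟩
    refine hsm Al hmem I hne ⟨fun i => w ↑i, ?_, fun i => hwnn ↑i⟩
    intro i
    have hiI : (↑i : Fin n) ∈ I := i.prop
    have hwi : 0 < w ↑i := (Finset.mem_filter.mp hiI).2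
    have hz : ∀ j, j ∉ I → w j = 0 := by
      intro j hj
      have : ¬ 0 < w j := by
        intro hc; exact hj (Finset.mem_filter.mpr ⟨Finset.mem_univ j, hc⟩)
      linarith [hwnn j]
    have hmv : ((Al.submatrix ((↑) : ↥I → Fin n) ((↑) : ↥I → Fin n)).mulVec
        (fun j => w ↑j)) i = w ↑i - (Δ.mulVec w) ↑i := by
      simp only [Matrix.mulVec, dotProduct, Matrix.submatrix_apply]
      have hrw : ∀ j : ↥I, Al ↑i ↑j * w ↑j
          = (if (↑i : Fin n) = ↑j then 1 else 0) * w ↑j - Δ ↑i ↑j * w ↑j := by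
        intro j
        rw [hAl]
        simp only [Matrix.one_apply]
        ring
      rw [Finset.sum_congr rfl (fun j _ => hrw j), Finset.sum_sub_distrib]
      rw [sum_I_ite I i w, sum_I_eq_mulVec Δ I i w hz]
      simp [Matrix.mulVec, dotProduct]
    rw [hmv]
    have := hwlt ↑i hwi
    linarith
  · -- specRad ≤ 1 → strong semimonotone
    intro hρ A hA I hne
    rintro ⟨x, hxlt, hxnn⟩
    set xh : Fin n → ℝ := fun i => if h : i ∈ I then x ⟨i, h⟩ else 0 with hxh
    have hxhnn : ∀ i, 0 ≤ xh i := by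
      intro i; rw [hxh]; dsimp only
      split
      · exact hxnn _
      · exact le_refl 0
    have hxhI : ∀ i : ↥I, xh ↑i = x i := by
      intro i; rw [hxh]; simp [i.prop]
    have hkey : ∀ i : ↥I, xh ↑i < (Δ.mulVec xh) ↑i := by
      intro i
      have hlt := hxlt i
      have hmv : ((A.submatrix ((↑) : ↥I → Fin n) ((↑) : ↥I → Fin n)).mulVec x) i
          = ∑ j : ↥I, A ↑i ↑j * xh ↑j := by
        simp only [Matrix.mulVec, dotProduct, Matrix.submatrix_apply]
        exact Finset.sum_congr rfl (fun j _ => by rw [hxhI j])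
      have hAlow : ∀ j : ↥I,
          ((if (↑i : Fin n) = ↑j then 1 else 0) - Δ ↑i ↑j) * xh ↑j ≤ A ↑i ↑j * xh ↑j := by
        intro j
        apply mul_le_mul_of_nonneg_right _ (hxhnn ↑j)
        have := (hA ↑i ↑j).1
        rw [hAl] at this
        simpa [Matrix.one_apply] using this
      have hsumle : ∑ j : ↥I, ((if (↑i : Fin n) = ↑j then 1 else 0) - Δ ↑i ↑j) * xh ↑j
          ≤ ∑ j : ↥I, A ↑i ↑j * xh ↑j := Finset.sum_le_sum (fun j _ => hAlow j)
      have hexp : ∑ j : ↥I, ((if (↑i : Fin n) = ↑j then 1 else 0) - Δ ↑i ↑j) * xh ↑j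
          = xh ↑i - ∑ j : ↥I, Δ ↑i ↑j * xh ↑j := by
        rw [Finset.sum_congr rfl (fun j _ => by ring :
          ∀ j ∈ (Finset.univ : Finset ↥I),
            ((if (↑i : Fin n) = ↑j then 1 else 0) - Δ ↑i ↑j) * xh ↑j
            = (if (↑i : Fin n) = ↑j then 1 else 0) * xh ↑j - Δ ↑i ↑j * xh ↑j)]
        rw [Finset.sum_sub_distrib, sum_I_ite I i xh]
      have hDle := sum_I_le_mulVec Δ hΔnn I i xh hxhnn
      rw [hmv] at hlt
      rw [hexp] at hsumle
      linarith
    -- find positive coordinate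
    have hpos : ∃ i₀, 0 < xh i₀ := by
      by_contra hc
      push_neg at hc
      have hx0 : ∀ i : ↥I, x i = 0 := by
        intro i
        have := le_antisymm (hc ↑i) (hxhnn ↑i)
        rw [hxhI i] at this; exact this
      obtain ⟨i, hi⟩ := hne
      have := hxlt ⟨i, hi⟩
      simp only [Matrix.mulVec, dotProduct] at this
      rw [Finset.sum_congr rfl (fun j _ => by rw [hx0 j, mul_zero])] at this
      simpa using this
    obtain ⟨i₀, hi₀⟩ := hpos
    -- build c
    set S : Finset (Fin n) := Finset.univ.filter (fun i => 0 < xh i) with hSdef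
    have hSne : S.Nonempty := ⟨i₀, Finset.mem_filter.mpr ⟨Finset.mem_univ _, hi₀⟩⟩
    set c : ℝ := S.inf' hSne (fun i => (Δ.mulVec xh) i / xh i) with hcdef
    have hc1 : 1 < c := by
      rw [hcdef, Finset.lt_inf'_iff]
      intro i hiS
      have hxi : 0 < xh i := (Finset.mem_filter.mp hiS).2
      have hiI : i ∈ I := by
        by_contra hiI
        rw [hxh] at hxi; simp [hiI] at hxi
      have := hkey ⟨i, hiI⟩
      rw [lt_div_iff₀ hxi, one_mul]
      exact this
    have hcx : ∀ i, c * xh i ≤ (Δ.mulVec xh) i := by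
      intro i
      by_cases hiS : i ∈ S
      · have hxi : 0 < xh i := (Finset.mem_filter.mp hiS).2
        have := Finset.inf'_le (fun i => (Δ.mulVec xh) i / xh i) hiS
        rw [← hcdef, le_div_iff₀ hxi] at this
        linarith [this]
      · have hxi : xh i = 0 := by
          have : ¬ 0 < xh i := fun hc' =>
            hiS (Finset.mem_filter.mpr ⟨Finset.mem_univ _, hc'⟩)
          linarith [hxhnn i]
        rw [hxi, mul_zero]
        simp only [Matrix.mulVec, dotProduct]
        exact Finset.sum_nonneg (fun j _ => mul_nonneg (hΔnn _ _) (hxhnn j))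
    have := specRad_ge Δ hΔnn xh hxhnn i₀ hi₀ c (by linarith) hcx
    linarith
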